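/- Let $P \subset \mathbb{R}^n$ be a polytope and $E$ a finite set of vectors containing all edge directions of $P$. Then the monotone diameter of $P$ is at most the monotone diameter of the zonotope $Z(E)$ generated by $E$; in particular, the monotone diameter of $P$ is at most $|E|$, the number of distinct edge directions of $P$. -/

import Mathlib

/-- The zonotope generated by a finite set E of vectors. -/
def zonotopeOf (n : ℕ) (E : Finset (Fin n → ℝ)) : Set (Fin n → ℝ) :=
  {x | ∃ t : (Fin n → ℝ) → ℝ, (∀ e, 0 ≤ t e ∧ t e ≤ 1) ∧ x = ∑ e ∈ E, t e • e}

/-- `HasMonoPathLe n P c x0 N`: from the vertex x0 of P there is a c-monotone edge path of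
length at most N ending at the c-minimal vertex of P. -/
def HasMonoPathLe (n : ℕ) (P : Set (Fin n → ℝ)) (c : Fin n → ℝ)
    (x0 : Fin n → ℝ) (N : ℕ) : Prop :=
  ∃ L, L ≤ N ∧ ∃ p : Fin (L + 1) → (Fin n → ℝ),
    p 0 = x0 ∧ (∀ t, p t ∈ Set.extremePoints ℝ P) ∧
    (∀ t : Fin L, p t.castSucc ≠ p t.succ ∧
      IsExposed ℝ P (segment ℝ (p t.castSucc) (p t.succ)) ∧
      ∑ i, c i * p t.succ i < ∑ i, c i * p t.castSucc i) ∧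
    ∀ y ∈ P, ∑ i, c i * p (Fin.last L) i ≤ ∑ i, c i * y i

namespace S19X
variable {n : ℕ}
open Finset
noncomputable section

def dot (a b : Fin n → ℝ) : ℝ := ∑ i, a i * b i

lemma dot_add_left (a b x : Fin n → ℝ) : dot (a + b) x = dot a x + dot b x := by
  simp [dot, add_mul, Finset.sum_add_distrib]

lemma dot_smul_left (r : ℝ) (a x : Fin n → ℝ) : dot (r • a) x = r * dot a x := by
  simp [dot, Finset.mul_sum, mul_assoc]

lemma dot_neg_left (a x : Fin n → ℝ) : dot (-a) x = - dot a x := by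
  simp [dot, Finset.sum_neg_distrib]

lemma dot_add_right (a x y : Fin n → ℝ) : dot a (x + y) = dot a x + dot a y := by
  simp [dot, mul_add, Finset.sum_add_distrib]

lemma dot_smul_right (r : ℝ) (a x : Fin n → ℝ) : dot a (r • x) = r * dot a x := by
  simp [dot, Finset.mul_sum]; ring_nf; simp [mul_comm, mul_assoc, mul_left_comm]

lemma dot_sub_right (a x y : Fin n → ℝ) : dot a (x - y) = dot a x - dot a y := by
  simp [dot, mul_sub, Finset.sum_sub_distrib]

lemma dot_zero_right (a : Fin n → ℝ) : dot a 0 = 0 := by simp [dot]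

lemma dot_sum_right (a : Fin n → ℝ) {ι : Type*} (s : Finset ι) (f : ι → Fin n → ℝ) :
    dot a (∑ i ∈ s, f i) = ∑ i ∈ s, dot a (f i) := by
  simp only [dot, Finset.mul_sum]
  rw [Finset.sum_comm]
  simp [Finset.sum_apply, Finset.mul_sum]

lemma dot_self_pos {a : Fin n → ℝ} (ha : a ≠ 0) : 0 < dot a a := by
  have : ∃ i, a i ≠ 0 := by
    by_contra h; push_neg at h; exact ha (funext h)
  obtain ⟨i, hi⟩ := this
  have : (0:ℝ) < a i * a i := mul_self_pos.2 hi
  exact Finset.sum_pos' (fun j _ => mul_self_nonneg _) ⟨i, Finset.mem_univ i, this⟩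

/-- dot as a continuous linear map in the second variable. -/
def dotCLM (a : Fin n → ℝ) : (Fin n → ℝ) →L[ℝ] ℝ :=
  { toLinearMap :=
      { toFun := dot a
        map_add' := dot_add_right a
        map_smul' := fun r x => by simp [dot_smul_right] }
    cont := by unfold dot; fun_prop }

@[simp] lemma dotCLM_apply (a x : Fin n → ℝ) : dotCLM a x = dot a x := rfl

lemma clm_eq_dot (l : (Fin n → ℝ) →L[ℝ] ℝ) (z : Fin n → ℝ) :
    l z = dot (fun i => l (Pi.single i 1)) z := by
  conv_lhs => rw [pi_eq_sum_univ z, map_sum]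
  simp only [map_smul, smul_eq_mul, dot]
  refine Finset.sum_congr rfl fun i _ => ?_
  rw [mul_comm]
  congr 1
  congr 1
  ext j
  simp [Pi.single_apply, eq_comm]

section Sb
lemma exists_avoid (B : Finset ℝ) {δ : ℝ} (hδ : 0 < δ) : ∃ t, 0 < t ∧ t < δ ∧ t ∉ B := by
  obtain ⟨t, ht, htB⟩ := Set.Infinite.exists_notMem_finset (Set.Ioo_infinite hδ) B
  exact ⟨t, ht.1, ht.2, htB⟩

lemma exists_ortho_avoid (U : Finset (Fin n → ℝ)) :
    ∃ w : Fin n → ℝ, ∀ u ∈ U, u ≠ 0 → dot w u ≠ 0 := by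
  classical
  induction U using Finset.induction_on with
  | empty => exact ⟨0, fun u hu => absurd hu (Finset.notMem_empty u)⟩
  | @insert a s ha ih =>
    obtain ⟨w, hw⟩ := ih
    by_cases ha0 : a = 0
    · refine ⟨w, fun u hu hu0 => ?_⟩
      rcases Finset.mem_insert.1 hu with rfl | hus
      · exact absurd ha0 hu0
      · exact hw u hus hu0
    · set B := (insert a s).image (fun v => -(dot w v) / (dot a v)) with hB
      obtain ⟨t, ht0, _, htB⟩ := exists_avoid B one_pos
      refine ⟨w + t • a, fun u hu hu0 => ?_⟩
      rw [dot_add_left, dot_smul_left]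
      by_cases hau : dot a u = 0
      · rcases Finset.mem_insert.1 hu with rfl | hus
        · exact absurd hau (ne_of_gt (dot_self_pos ha0))
        · simpa [hau] using hw u hus hu0
      · intro hcon
        apply htB
        rw [hB, Finset.mem_image]
        refine ⟨u, hu, ?_⟩
        field_simp
        linarith [hcon]

variable {V : Finset (Fin n → ℝ)}

lemma dot_le_on_hull {a : Fin n → ℝ} {m : ℝ} (h : ∀ v ∈ V, m ≤ dot a v) :
    ∀ z ∈ convexHull ℝ (V : Set (Fin n → ℝ)), m ≤ dot a z := by
  intro z hz
  have hconv : Convex ℝ {z : Fin n → ℝ | m ≤ dot a z} :=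
    convex_halfSpace_ge ⟨dot_add_right a, fun r x => dot_smul_right r a x⟩ m
  exact convexHull_min (fun v hv => h v hv) hconv hz

/-- representation of a hull member -/
lemma hull_rep {z : Fin n → ℝ} (hz : z ∈ convexHull ℝ (V : Set (Fin n → ℝ))) :
    ∃ w : (Fin n → ℝ) → ℝ, (∀ v ∈ V, 0 ≤ w v) ∧ ∑ v ∈ V, w v = 1 ∧ ∑ v ∈ V, w v • v = z :=
  Finset.mem_convexHull'.1 hz
end Sb

section Sc
variable {V : Finset (Fin n → ℝ)}
lemma dot_hull_eq_sum {V : Finset (Fin n → ℝ)} {a : Fin n → ℝ} {w : (Fin n → ℝ) → ℝ} :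
    dot a (∑ v ∈ V, w v • v) = ∑ v ∈ V, w v * dot a v := by
  rw [dot_sum_right]
  exact Finset.sum_congr rfl fun v _ => dot_smul_right _ _ _

variable {V : Finset (Fin n → ℝ)}

/-- If x is the unique minimizer over V of the linear functional dot a, then every hull point z
has dot a x ≤ dot a z with equality only for z = x. -/
lemma unique_argmin_hull {a x : Fin n → ℝ} (hx : x ∈ V)
    (h : ∀ v ∈ V, v ≠ x → dot a x < dot a v) :
    ∀ z ∈ convexHull ℝ (V : Set (Fin n → ℝ)), dot a x ≤ dot a z ∧ (dot a z = dot a x → z = x) := by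
  intro z hz
  have hle : ∀ v ∈ V, dot a x ≤ dot a v := by
    intro v hv
    rcases eq_or_ne v x with rfl | hvx
    · exact le_refl _
    · exact (h v hv hvx).le
  refine ⟨dot_le_on_hull hle z hz, ?_⟩
  intro heq
  obtain ⟨w, hw0, hw1, hwz⟩ := hull_rep hz
  have hsum : ∑ v ∈ V, w v * (dot a v - dot a x) = 0 := by
    have : dot a z = ∑ v ∈ V, w v * dot a v := by rw [← hwz, dot_hull_eq_sum]
    calc ∑ v ∈ V, w v * (dot a v - dot a x)
        = (∑ v ∈ V, w v * dot a v) - (∑ v ∈ V, w v) * dot a x := by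
          rw [Finset.sum_mul, ← Finset.sum_sub_distrib]; exact Finset.sum_congr rfl fun _ _ => by ring
      _ = 0 := by rw [← this, hw1, heq]; ring
  have hzero : ∀ v ∈ V, w v * (dot a v - dot a x) = 0 :=
    (Finset.sum_eq_zero_iff_of_nonneg (fun v hv =>
      mul_nonneg (hw0 v hv) (sub_nonneg.2 (hle v hv)))).1 hsum
  have hwv : ∀ v ∈ V, v ≠ x → w v = 0 := by
    intro v hv hvx
    rcases mul_eq_zero.1 (hzero v hv) with h0 | h0
    · exact h0
    · exact absurd (sub_eq_zero.1 h0) (ne_of_gt (h v hv hvx))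
  have hwx : w x = 1 := by
    rw [← hw1, eq_comm, Finset.sum_eq_single x (fun v hv hvx => hwv v hv hvx) (fun hxx => absurd hx hxx)]
  rw [← hwz, Finset.sum_eq_single x (fun v hv hvx => by rw [hwv v hv hvx, zero_smul])
    (fun hxx => absurd hx hxx), hwx, one_smul]

lemma extreme_of_unique_argmin {a x : Fin n → ℝ} (hx : x ∈ V)
    (h : ∀ v ∈ V, v ≠ x → dot a x < dot a v) :
    x ∈ Set.extremePoints ℝ (convexHull ℝ (V : Set (Fin n → ℝ))) := by
  have key := unique_argmin_hull hx h
  refine mem_extremePoints.2 ⟨subset_convexHull ℝ _ hx, ?_⟩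
  intro x₁ hx₁ x₂ hx₂ hseg
  obtain ⟨s, t, hs, ht, hst, hsum⟩ := hseg
  have h1 := key x₁ hx₁
  have h2 := key x₂ hx₂
  have hx' : dot a x = s * dot a x₁ + t * dot a x₂ := by
    rw [← hsum, dot_add_right, dot_smul_right, dot_smul_right]
  have hst' : s * dot a x + t * dot a x = dot a x := by linear_combination dot a x * hst
  have h5 : s * dot a x₁ ≤ s * dot a x := by
    linarith [mul_le_mul_of_nonneg_left h2.1 ht.le]
  have h6 : t * dot a x₂ ≤ t * dot a x := by
    linarith [mul_le_mul_of_nonneg_left h1.1 hs.le]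
  have he1 : dot a x₁ = dot a x := le_antisymm ((mul_le_mul_iff_right₀ hs).1 h5) h1.1
  have he2 : dot a x₂ = dot a x := le_antisymm ((mul_le_mul_iff_right₀ ht).1 h6) h2.1
  exact ⟨h1.2 he1, h2.2 he2⟩

/-- the exposed-face lemma: if x,y are in V, the functional dot a attains its V-min at x and y,
and every minimizer in V lies on the segment [x,y], then the segment is an exposed face of the
hull. -/
lemma isExposed_segment {a x y : Fin n → ℝ} (hx : x ∈ V) (hy : y ∈ V)
    (hmin : ∀ v ∈ V, dot a x ≤ dot a v) (hymin : dot a y = dot a x)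
    (hseg : ∀ v ∈ V, dot a v = dot a x → v ∈ segment ℝ x y) :
    IsExposed ℝ (convexHull ℝ (V : Set (Fin n → ℝ))) (segment ℝ x y) := by
  intro _
  refine ⟨dotCLM (-a), ?_⟩
  have hxh : x ∈ convexHull ℝ (V : Set (Fin n → ℝ)) := subset_convexHull ℝ _ hx
  have hyh : y ∈ convexHull ℝ (V : Set (Fin n → ℝ)) := subset_convexHull ℝ _ hy
  have hsub : segment ℝ x y ⊆ convexHull ℝ (V : Set (Fin n → ℝ)) :=
    (convex_convexHull ℝ _).segment_subset hxh hyh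
  ext z
  simp only [Set.mem_setOf_eq, dotCLM_apply, dot_neg_left, neg_le_neg_iff]
  constructor
  · rintro hz
    obtain ⟨s, t, hs, ht, hst, hsum⟩ := hz
    refine ⟨hsub ⟨s, t, hs, ht, hst, hsum⟩, ?_⟩
    intro z' hz'
    have : dot a z = dot a x := by
      rw [← hsum, dot_add_right, dot_smul_right, dot_smul_right, hymin]
      linear_combination dot a x * hst
    rw [this]
    exact dot_le_on_hull hmin z' hz'
  · rintro ⟨hz, hzmin⟩
    have hzx : dot a z = dot a x := le_antisymm (hzmin x hxh) (dot_le_on_hull hmin z hz)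
    obtain ⟨w, hw0, hw1, hwz⟩ := hull_rep hz
    have hsum0 : ∑ v ∈ V, w v * (dot a v - dot a x) = 0 := by
      have : dot a z = ∑ v ∈ V, w v * dot a v := by rw [← hwz, dot_hull_eq_sum]
      calc ∑ v ∈ V, w v * (dot a v - dot a x)
          = (∑ v ∈ V, w v * dot a v) - (∑ v ∈ V, w v) * dot a x := by
            rw [Finset.sum_mul, ← Finset.sum_sub_distrib]; exact Finset.sum_congr rfl fun _ _ => by ring
        _ = 0 := by rw [← this, hw1, hzx]; ring
    have hzero : ∀ v ∈ V, w v * (dot a v - dot a x) = 0 :=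
      (Finset.sum_eq_zero_iff_of_nonneg (fun v hv =>
        mul_nonneg (hw0 v hv) (sub_nonneg.2 (hmin v hv)))).1 hsum0
    -- support is in the segment
    classical
    set V' := V.filter (fun v => w v ≠ 0) with hV'
    have hzV' : ∑ v ∈ V', w v • v = z := by
      rw [← hwz, hV']
      exact Finset.sum_filter_of_ne (fun v _ hne => by
        intro hw; rw [hw, zero_smul] at hne; exact hne rfl)
    have hw1' : ∑ v ∈ V', w v = 1 := by
      rw [← hw1, hV']
      exact Finset.sum_filter_of_ne (fun v _ hne => fun hw => hne hw)
    have hmem : ∀ v ∈ V', v ∈ segment ℝ x y := by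
      intro v hv
      rw [hV', Finset.mem_filter] at hv
      apply hseg v hv.1
      rcases mul_eq_zero.1 (hzero v hv.1) with h0 | h0
      · exact absurd h0 hv.2
      · linarith [sub_eq_zero.1 h0]
    rw [← hzV']
    exact (convex_segment x y).sum_mem (fun v hv => hw0 v (Finset.mem_filter.1 hv).1) hw1' hmem
end Sc

section Sd
variable (E : Finset (Fin n → ℝ))
def vsum (S : Finset (Fin n → ℝ)) : Fin n → ℝ := ∑ e ∈ S, e

def TT : Finset (Fin n → ℝ) := E.powerset.image vsum

lemma mem_TT_of_subset {S : Finset (Fin n → ℝ)} (hS : S ⊆ E) : vsum S ∈ TT E := by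
  rw [TT, Finset.mem_image]
  exact ⟨S, Finset.mem_powerset.2 hS, rfl⟩

lemma zono_convex : Convex ℝ (zonotopeOf n E) := by
  rintro z1 ⟨t1, ht1, rfl⟩ z2 ⟨t2, ht2, rfl⟩ a b ha hb hab
  refine ⟨fun e => a * t1 e + b * t2 e, fun e =>
    ⟨add_nonneg (mul_nonneg ha (ht1 e).1) (mul_nonneg hb (ht2 e).1), ?_⟩, ?_⟩
  · have h1 : a * t1 e ≤ a * 1 := mul_le_mul_of_nonneg_left (ht1 e).2 ha
    have h2 : b * t2 e ≤ b * 1 := mul_le_mul_of_nonneg_left (ht2 e).2 hb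
    simp only []
    linarith
  · rw [Finset.smul_sum, Finset.smul_sum, ← Finset.sum_add_distrib]
    refine Finset.sum_congr rfl fun e _ => ?_
    rw [add_smul, smul_smul, smul_smul]

lemma mem_zono_of_subset {S : Finset (Fin n → ℝ)} (hS : S ⊆ E) : vsum S ∈ zonotopeOf n E := by
  classical
  refine ⟨fun e => if e ∈ S then 1 else 0, fun e => ?_, ?_⟩
  · dsimp only; split <;> norm_num
  · have h1 : ∀ e ∈ E, (if e ∈ S then (1:ℝ) else 0) • e = if e ∈ S then e else 0 := by
      intro e _; split <;> simp
    rw [Finset.sum_congr rfl h1, ← Finset.sum_filter, Finset.filter_mem_eq_inter,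
      Finset.inter_eq_right.2 hS, vsum]

lemma zono_eq_hull : zonotopeOf n E = convexHull ℝ ((TT E : Finset (Fin n → ℝ)) : Set (Fin n → ℝ)) := by
  classical
  apply Set.Subset.antisymm
  · rintro x ⟨t, ht, rfl⟩
    induction E using Finset.induction_on with
    | empty => simp [TT, vsum]
    | @insert a F haF ih =>
      rw [Finset.sum_insert haF]
      have hTTmono : (TT F : Set (Fin n → ℝ)) ⊆ (TT (insert a F) : Set (Fin n → ℝ)) := by
        intro z hz
        simp only [TT, Finset.coe_image, Set.mem_image, Finset.mem_coe, Finset.mem_powerset] at hz ⊢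
        obtain ⟨S, hS, rfl⟩ := hz
        exact ⟨S, hS.trans (Finset.subset_insert a F), rfl⟩
      have hy := ih
      have hy' : (∑ e ∈ F, t e • e) ∈ convexHull ℝ ((TT (insert a F) : Finset (Fin n → ℝ)) : Set (Fin n → ℝ)) :=
        convexHull_mono hTTmono hy
      have hay : (a + ∑ e ∈ F, t e • e) ∈ convexHull ℝ ((TT (insert a F) : Finset (Fin n → ℝ)) : Set (Fin n → ℝ)) := by
        obtain ⟨w, hw0, hw1, hwz⟩ := hull_rep hy
        have hmem : ∀ z ∈ TT F, a + z ∈ convexHull ℝ ((TT (insert a F) : Finset (Fin n → ℝ)) : Set (Fin n → ℝ)) := by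
          intro z hz
          rw [TT, Finset.mem_image] at hz
          obtain ⟨S, hS, rfl⟩ := hz
          rw [Finset.mem_powerset] at hS
          have haS : a ∉ S := fun h => haF (hS h)
          have : a + vsum S = vsum (insert a S) := by rw [vsum, vsum, Finset.sum_insert haS]
          rw [this]
          exact subset_convexHull ℝ _ (mem_TT_of_subset _ (Finset.insert_subset_insert a hS))
        have heq : a + ∑ e ∈ F, t e • e = ∑ z ∈ TT F, w z • (a + z) := by
          have : ∑ z ∈ TT F, w z • (a + z) = (∑ z ∈ TT F, w z) • a + ∑ z ∈ TT F, w z • z := by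
            rw [Finset.sum_smul, ← Finset.sum_add_distrib]
            exact Finset.sum_congr rfl fun z _ => smul_add _ _ _
          rw [this, hw1, one_smul, hwz]
        rw [heq]
        exact (convex_convexHull ℝ _).sum_mem (fun z hz => hw0 z hz) hw1 hmem
      have hcomb := (convex_convexHull ℝ ((TT (insert a F) : Finset (Fin n → ℝ)) : Set (Fin n → ℝ)))
        hay hy' (a := t a) (b := 1 - t a) (ht a).1 (by linarith [(ht a).2]) (by ring)
      have heq2 : t a • a + ∑ e ∈ F, t e • e
          = t a • (a + ∑ e ∈ F, t e • e) + (1 - t a) • (∑ e ∈ F, t e • e) := by module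
      rw [heq2]
      exact hcomb
  · refine convexHull_min ?_ (zono_convex E)
    intro z hz
    simp only [TT, Finset.coe_image, Set.mem_image, Finset.mem_coe, Finset.mem_powerset] at hz
    obtain ⟨S, hS, rfl⟩ := hz
    exact mem_zono_of_subset E hS
end Sd

section Se
variable (E : Finset (Fin n → ℝ))
def Msum (l : Fin n → ℝ) : ℝ := ∑ e ∈ E.filter (fun e => 0 < dot l e), dot l e
def zmax (l : Fin n → ℝ) : Fin n → ℝ := vsum (E.filter (fun e => 0 < dot l e))

lemma dot_zmax (l : Fin n → ℝ) : dot l (zmax E l) = Msum E l := by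
  rw [zmax, vsum, dot_sum_right, Msum]

lemma dot_rep (l : Fin n → ℝ) (t : (Fin n → ℝ) → ℝ) :
    dot l (∑ e ∈ E, t e • e) = ∑ e ∈ E, t e * dot l e := by
  rw [dot_sum_right]; exact Finset.sum_congr rfl fun e _ => dot_smul_right _ _ _

lemma zono_le_Msum (l : Fin n → ℝ) : ∀ z ∈ zonotopeOf n E, dot l z ≤ Msum E l := by
  classical
  rintro z ⟨t, ht, rfl⟩
  rw [dot_rep, Msum, Finset.sum_filter]
  refine Finset.sum_le_sum fun e he => ?_
  by_cases h : 0 < dot l e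
  · rw [if_pos h]
    nlinarith [(ht e).1, (ht e).2]
  · rw [if_neg h]
    push_neg at h
    exact mul_nonpos_of_nonneg_of_nonpos (ht e).1 h

/-- forcing lemma : a maximizer's representation is forced on generators with nonzero functional
value -/
lemma zono_force (l : Fin n → ℝ) (t : (Fin n → ℝ) → ℝ) (ht : ∀ e, 0 ≤ t e ∧ t e ≤ 1)
    (hmax : dot l (∑ e ∈ E, t e • e) = Msum E l) :
    ∀ e ∈ E, (0 < dot l e → t e = 1) ∧ (dot l e < 0 → t e = 0) := by
  classical
  have hterm : ∀ e ∈ E, ((if 0 < dot l e then dot l e else 0) - t e * dot l e) = 0 := by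
    refine (Finset.sum_eq_zero_iff_of_nonneg ?_).1 ?_
    · intro e he
      by_cases h : 0 < dot l e
      · rw [if_pos h]; nlinarith [(ht e).1, (ht e).2]
      · rw [if_neg h]; push_neg at h
        simp only [zero_sub, neg_nonneg]
        exact mul_nonpos_of_nonneg_of_nonpos (ht e).1 h
    · rw [Finset.sum_sub_distrib, ← Finset.sum_filter, ← Msum, ← dot_rep, hmax, sub_self]
  intro e he
  have h0 := hterm e he
  constructor
  · intro hpos
    rw [if_pos hpos] at h0
    have : (1 - t e) * dot l e = 0 := by linarith
    rcases mul_eq_zero.1 this with h | h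
    · linarith
    · exact absurd h (ne_of_gt hpos)
  · intro hneg
    rw [if_neg (by linarith)] at h0
    have : t e * dot l e = 0 := by linarith
    rcases mul_eq_zero.1 this with h | h
    · exact h
    · exact absurd h (ne_of_lt hneg)

lemma zmax_mem : ∀ l, zmax E l ∈ zonotopeOf n E := by
  intro l
  have : E.filter (fun e => 0 < dot l e) ⊆ E := Finset.filter_subset _ _
  classical
  refine ⟨fun e => if e ∈ E.filter (fun e => 0 < dot l e) then 1 else 0, fun e => ?_, ?_⟩
  · dsimp only; split <;> norm_num
  · have h1 : ∀ e ∈ E, (if e ∈ E.filter (fun e => 0 < dot l e) then (1:ℝ) else 0) • e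
        = if e ∈ E.filter (fun e => 0 < dot l e) then e else 0 := by
      intro e _; split <;> simp
    rw [Finset.sum_congr rfl h1, ← Finset.sum_filter, Finset.filter_mem_eq_inter,
      Finset.inter_eq_right.2 this, zmax, vsum]

/-- the unique maximizer of a generic functional -/
lemma zmax_unique (h : Fin n → ℝ) (hgen : ∀ e ∈ E, e ≠ 0 → dot h e ≠ 0) :
    ∀ z ∈ zonotopeOf n E, dot h z = Msum E h → z = zmax E h := by
  classical
  rintro z ⟨t, ht, rfl⟩ hmax
  have hforce := zono_force E h t ht hmax
  rw [zmax, vsum, ← Finset.sum_filter_add_sum_filter_not E (fun e => 0 < dot h e) (fun e => t e • e)]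
  have h2 : ∑ e ∈ E.filter (fun e => ¬ 0 < dot h e), t e • e = 0 := by
    refine Finset.sum_eq_zero fun e he => ?_
    rw [Finset.mem_filter] at he
    by_cases he0 : e = 0
    · rw [he0, smul_zero]
    · have hne := hgen e he.1 he0
      have hlt : dot h e < 0 := lt_of_le_of_ne (not_lt.1 he.2) hne
      rw [(hforce e he.1).2 hlt, zero_smul]
  rw [h2, add_zero]
  refine Finset.sum_congr rfl fun e he => ?_
  rw [Finset.mem_filter] at he
  rw [(hforce e he.1).1 he.2, one_smul]

lemma zmax_extreme (h : Fin n → ℝ) (hgen : ∀ e ∈ E, e ≠ 0 → dot h e ≠ 0) :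
    zmax E h ∈ Set.extremePoints ℝ (zonotopeOf n E) := by
  refine mem_extremePoints.2 ⟨zmax_mem E h, ?_⟩
  intro x₁ hx₁ x₂ hx₂ hseg
  obtain ⟨s, t, hs, ht, hst, hsum⟩ := hseg
  have h1 : dot h x₁ ≤ Msum E h := zono_le_Msum E h x₁ hx₁
  have h2 : dot h x₂ ≤ Msum E h := zono_le_Msum E h x₂ hx₂
  have hM : dot h (zmax E h) = Msum E h := dot_zmax E h
  have hx' : Msum E h = s * dot h x₁ + t * dot h x₂ := by
    rw [← hM, ← hsum, dot_add_right, dot_smul_right, dot_smul_right]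
  have hstM : s * Msum E h + t * Msum E h = Msum E h := by linear_combination Msum E h * hst
  have he1 : dot h x₁ = Msum E h := by
    by_contra hne
    have : dot h x₁ < Msum E h := lt_of_le_of_ne h1 hne
    nlinarith [mul_le_mul_of_nonneg_left h2 ht.le, mul_lt_mul_of_pos_left this hs]
  have he2 : dot h x₂ = Msum E h := by
    by_contra hne
    have : dot h x₂ < Msum E h := lt_of_le_of_ne h2 hne
    nlinarith [mul_le_mul_of_nonneg_left h1 hs.le, mul_lt_mul_of_pos_left this ht]
  exact ⟨zmax_unique E h hgen x₁ hx₁ he1, zmax_unique E h hgen x₂ hx₂ he2⟩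
end Se

section Sf
variable (E : Finset (Fin n → ℝ))
def ind (S : Finset (Fin n → ℝ)) : (Fin n → ℝ) → ℝ := fun e => if e ∈ S then 1 else 0

lemma ind_bounds (S : Finset (Fin n → ℝ)) : ∀ e, 0 ≤ ind S e ∧ ind S e ≤ 1 := by
  intro e; simp only [ind]; split <;> norm_num

lemma sum_ind {S : Finset (Fin n → ℝ)} (hS : S ⊆ E) : ∑ e ∈ E, ind S e • e = vsum S := by
  classical
  have h1 : ∀ e ∈ E, ind S e • e = if e ∈ S then e else 0 := by
    intro e _; simp only [ind]; split <;> simp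
  rw [Finset.sum_congr rfl h1, ← Finset.sum_filter, Finset.filter_mem_eq_inter,
    Finset.inter_eq_right.2 hS, vsum]

/-- perturbing a representation at a single generator stays in the zonotope -/
lemma zono_update {z : Fin n → ℝ} {t : (Fin n → ℝ) → ℝ} (htb : ∀ e, 0 ≤ t e ∧ t e ≤ 1)
    (hrep : ∑ e ∈ E, t e • e = z) {e₀ : Fin n → ℝ} (he₀E : e₀ ∈ E)
    {v : ℝ} (hv0 : 0 ≤ v) (hv1 : v ≤ 1) :
    z - t e₀ • e₀ + v • e₀ ∈ zonotopeOf n E := by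
  classical
  refine ⟨Function.update t e₀ v, fun e => ?_, ?_⟩
  · rcases eq_or_ne e e₀ with rfl | hne
    · rw [Function.update_self]; exact ⟨hv0, hv1⟩
    · rw [Function.update_of_ne hne]; exact htb e
  · have hupd : ∀ e ∈ E, (Function.update t e₀ v e) • e
        = Function.update (fun e => t e • e) e₀ (v • e₀) e := by
      intro e _
      rcases eq_or_ne e e₀ with rfl | hne
      · rw [Function.update_self, Function.update_self]
      · rw [Function.update_of_ne hne, Function.update_of_ne hne]
    rw [Finset.sum_congr rfl hupd, Finset.sum_update_of_mem he₀E,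
      Finset.sum_sdiff_eq_sub (Finset.singleton_subset_iff.2 he₀E), Finset.sum_singleton, hrep]
    abel

lemma extreme_rep_subset {z : Fin n → ℝ} (hz : z ∈ Set.extremePoints ℝ (zonotopeOf n E))
    {S S' : Finset (Fin n → ℝ)} (hS : S ⊆ E) (hS' : S' ⊆ E)
    (hzS : vsum S = z) (hzS' : vsum S' = z) :
    ∀ e₀ ∈ E, e₀ ≠ 0 → e₀ ∈ S → e₀ ∈ S' := by
  classical
  intro e₀ he₀E he₀0 he₀S
  by_contra he₀S'
  set t : (Fin n → ℝ) → ℝ := fun e => (ind S e + ind S' e) / 2 with htdef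
  have htb : ∀ e, 0 ≤ t e ∧ t e ≤ 1 := by
    intro e
    have h1 := ind_bounds S e
    have h2 := ind_bounds S' e
    simp only [htdef]
    constructor
    · linarith [h1.1, h2.1]
    · linarith [h1.2, h2.2]
  have hrep : ∑ e ∈ E, t e • e = z := by
    have hcongr : ∀ e ∈ E, t e • e = (2⁻¹ : ℝ) • (ind S e • e) + (2⁻¹ : ℝ) • (ind S' e • e) := by
      intro e _
      simp only [htdef]
      rw [smul_smul, smul_smul, ← add_smul]; ring_nf
    rw [Finset.sum_congr rfl hcongr, Finset.sum_add_distrib, ← Finset.smul_sum, ← Finset.smul_sum,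
      sum_ind E hS, sum_ind E hS', hzS, hzS', ← add_smul]
    norm_num
  have hte₀ : t e₀ = 1/2 := by
    simp only [htdef, ind, if_pos he₀S, if_neg he₀S']; norm_num
  have hm0 := zono_update E htb hrep he₀E (le_refl (0:ℝ)) zero_le_one
  have hm1 := zono_update E htb hrep he₀E zero_le_one (le_refl (1:ℝ))
  rw [zero_smul, add_zero, hte₀] at hm0
  rw [hte₀] at hm1
  have hseg : z ∈ openSegment ℝ (z - (1/2 : ℝ) • e₀) (z - (1/2 : ℝ) • e₀ + (1:ℝ) • e₀) := by
    refine ⟨1/2, 1/2, by norm_num, by norm_num, by norm_num, ?_⟩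
    module
  have := hz.2 hm0 hm1 hseg
  apply he₀0
  have h5 : (1/2 : ℝ) • e₀ = 0 := by
    have := sub_eq_self.1 this
    exact this
  have := smul_eq_zero.1 h5
  rcases this with h | h
  · norm_num at h
  · exact h

lemma extreme_unique_rep {z : Fin n → ℝ} (hz : z ∈ Set.extremePoints ℝ (zonotopeOf n E))
    {S S' : Finset (Fin n → ℝ)} (hS : S ⊆ E) (hS' : S' ⊆ E)
    (hzS : vsum S = z) (hzS' : vsum S' = z) :
    ∀ e ∈ E, e ≠ 0 → (e ∈ S ↔ e ∈ S') := by
  intro e he he0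
  exact ⟨extreme_rep_subset E hz hS hS' hzS hzS' e he he0,
    extreme_rep_subset E hz hS' hS hzS' hzS e he he0⟩

/-- discrete intermediate value for predicates along a Fin path -/
lemma fin_chain {L : ℕ} (Q : Fin (L+1) → Prop)
    (hne : ¬ (Q 0 ↔ Q (Fin.last L))) : ∃ k : Fin L, ¬ (Q k.castSucc ↔ Q k.succ) := by
  by_contra hcon
  push_neg at hcon
  apply hne
  have : ∀ t : Fin (L+1), Q 0 ↔ Q t := by
    intro t
    induction t using Fin.induction with
    | zero => exact Iff.rfl
    | succ i ih =>
      exact ih.trans (hcon i)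
  exact this (Fin.last L)
end Sf

section Sg
variable (E : Finset (Fin n → ℝ))
lemma ind_one_iff (S : Finset (Fin n → ℝ)) (e : Fin n → ℝ) : ind S e = 1 ↔ e ∈ S := by
  classical by_cases h : e ∈ S <;> simp [ind, h]

lemma ind_zero_iff (S : Finset (Fin n → ℝ)) (e : Fin n → ℝ) : ind S e = 0 ↔ e ∉ S := by
  classical by_cases h : e ∈ S <;> simp [ind, h]

/-- Steps of a monotone path on the zonotope: generators at which the endpoint representations
differ are parallel to the step direction. -/
lemma step_flip {x y : Fin n → ℝ} (hxy : x ≠ y)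
    (hexp : IsExposed ℝ (zonotopeOf n E) (segment ℝ x y))
    {Sx Sy : Finset (Fin n → ℝ)} (hSx : Sx ⊆ E) (hSy : Sy ⊆ E)
    (hx : vsum Sx = x) (hy : vsum Sy = y) :
    ∀ e ∈ E, e ≠ 0 → ¬ (e ∈ Sx ↔ e ∈ Sy) → ∃ s : ℝ, s ≠ 0 ∧ e = s • (y - x) := by
  classical
  obtain ⟨l, hl⟩ := hexp ⟨x, left_mem_segment ℝ x y⟩
  set vl : Fin n → ℝ := fun i => l (Pi.single i 1) with hvl
  have hlz : ∀ z, l z = dot vl z := fun z => clm_eq_dot l z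
  have hxseg : x ∈ segment ℝ x y := left_mem_segment ℝ x y
  have hyseg : y ∈ segment ℝ x y := right_mem_segment ℝ x y
  rw [hl] at hxseg hyseg
  obtain ⟨hxZ, hxmax⟩ := hxseg
  obtain ⟨hyZ, hymax⟩ := hyseg
  -- x and y attain the maximum Msum E vl
  have hmaxval : ∀ {z : Fin n → ℝ}, z ∈ zonotopeOf n E → (∀ w ∈ zonotopeOf n E, l w ≤ l z) →
      dot vl z = Msum E vl := by
    intro z hzZ hzmax
    refine le_antisymm (zono_le_Msum E vl z hzZ) ?_
    have := hzmax (zmax E vl) (zmax_mem E vl)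
    rw [hlz, hlz, dot_zmax E vl] at this
    exact this
  have hxM : dot vl x = Msum E vl := hmaxval hxZ hxmax
  have hyM : dot vl y = Msum E vl := hmaxval hyZ hymax
  have hforce : ∀ (S : Finset (Fin n → ℝ)), S ⊆ E → vsum S = x ∨ vsum S = y →
      ∀ e ∈ E, (0 < dot vl e → e ∈ S) ∧ (dot vl e < 0 → e ∉ S) := by
    intro S hS hSS e he
    have hrep : ∑ e ∈ E, ind S e • e = vsum S := sum_ind E hS
    have hM : dot vl (∑ e ∈ E, ind S e • e) = Msum E vl := by
      rcases hSS with h | h <;> rw [hrep, h]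
      · exact hxM
      · exact hyM
    have := zono_force E vl (ind S) (ind_bounds S) hM e he
    exact ⟨fun hp => (ind_one_iff S e).1 (this.1 hp), fun hn => (ind_zero_iff S e).1 (this.2 hn)⟩
  intro e heE he0 hflip
  -- first, dot vl e = 0
  have hvle : dot vl e = 0 := by
    by_contra hne
    rcases lt_or_gt_of_ne hne with hlt | hgt
    · have h1 := (hforce Sx hSx (Or.inl hx) e heE).2 hlt
      have h2 := (hforce Sy hSy (Or.inr hy) e heE).2 hlt
      exact hflip ⟨fun h => absurd h h1, fun h => absurd h h2⟩
    · have h1 := (hforce Sx hSx (Or.inl hx) e heE).1 hgt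
      have h2 := (hforce Sy hSy (Or.inr hy) e heE).1 hgt
      exact hflip ⟨fun _ => h2, fun _ => h1⟩
  -- case analysis on direction of flip
  have hcase : (e ∈ Sx ∧ e ∉ Sy) ∨ (e ∈ Sy ∧ e ∉ Sx) := by tauto
  -- key: subtracting e from the relevant endpoint stays in the face
  have hkey : ∀ (S : Finset (Fin n → ℝ)) (z : Fin n → ℝ), S ⊆ E → vsum S = z → z ∈ zonotopeOf n E →
      dot vl z = Msum E vl → e ∈ S → z - e ∈ segment ℝ x y := by
    intro S z hS hSz hzZ hzM heS
    have hrep : ∑ e ∈ E, ind S e • e = z := by rw [sum_ind E hS, hSz]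
    have hmem := zono_update E (ind_bounds S) hrep heE (v := 0) (le_refl 0) zero_le_one
    have hinde : ind S e = 1 := (ind_one_iff S e).2 heS
    rw [zero_smul, add_zero, hinde, one_smul] at hmem
    have hzeM : dot vl (z - e) = Msum E vl := by rw [dot_sub_right, hvle, hzM, sub_zero]
    rw [hl]
    refine ⟨hmem, ?_⟩
    intro w hw
    rw [hlz, hlz, hzeM]
    exact zono_le_Msum E vl w hw
  rcases hcase with ⟨heSx, heSy⟩ | ⟨heSy, heSx⟩
  · have hseg := hkey Sx x hSx hx hxZ hxM heSx
    obtain ⟨a, b, ha, hb, hab, habz⟩ := hseg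
    have h1 : a = 1 - b := by linarith
    rw [h1] at habz
    have h2 : e = x - ((1-b) • x + b • y) := by rw [habz]; abel
    refine ⟨-b, ?_, ?_⟩
    · intro hb0
      apply he0
      have hb' : b = 0 := by linarith [neg_eq_zero.1 hb0]
      rw [h2, hb']
      module
    · rw [h2]; module
  · have hseg := hkey Sy y hSy hy hyZ hyM heSy
    obtain ⟨a, b, ha, hb, hab, habz⟩ := hseg
    have h1 : b = 1 - a := by linarith
    rw [h1] at habz
    have h2 : e = y - (a • x + (1-a) • y) := by rw [habz]; abel
    refine ⟨a, ?_, ?_⟩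
    · intro ha0
      apply he0
      rw [h2, ha0]
      module
    · rw [h2]; module
end Sg

section Sh
variable (E : Finset (Fin n → ℝ)) (c : Fin n → ℝ)
def nrm (v : Fin n → ℝ) : Fin n → ℝ := (dot c v)⁻¹ • v

def Dcl : Finset (Fin n → ℝ) := (E.filter (fun e => dot c e ≠ 0)).image (nrm c)

lemma nrm_smul {s : ℝ} (hs : s ≠ 0) {v : Fin n → ℝ} (hv : dot c v ≠ 0) :
    nrm c (s • v) = nrm c v := by
  rw [nrm, nrm, dot_smul_right, smul_smul]
  congr 1
  rw [mul_inv]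
  field_simp

/-- there is a generic perturbation h of c -/
lemma exists_h : ∃ h : Fin n → ℝ, (∀ e ∈ E, e ≠ 0 → dot h e ≠ 0) ∧
    (∀ e ∈ E, dot c e ≠ 0 → (0 < dot h e ↔ 0 < dot c e)) := by
  classical
  obtain ⟨w, hw⟩ := exists_ortho_avoid E
  set T := (E.filter (fun e => dot c e ≠ 0)).image (fun e => |dot c e| / (|dot w e| + 1)) with hT
  have hTpos : ∀ r ∈ T, 0 < r := by
    intro r hr
    rw [hT, Finset.mem_image] at hr
    obtain ⟨e, he, rfl⟩ := hr
    rw [Finset.mem_filter] at he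
    have h1 : 0 < |dot c e| := abs_pos.2 he.2
    positivity
  set μ := if hne : T.Nonempty then T.min' hne else 1 with hμ
  have hμpos : 0 < μ := by
    rw [hμ]
    split
    · next hne => exact hTpos _ (T.min'_mem hne)
    · norm_num
  have hμle : ∀ e ∈ E, dot c e ≠ 0 → μ * |dot w e| < |dot c e| := by
    intro e he hce
    have hmem : |dot c e| / (|dot w e| + 1) ∈ T := by
      rw [hT, Finset.mem_image]
      exact ⟨e, Finset.mem_filter.2 ⟨he, hce⟩, rfl⟩
    have hμle' : μ ≤ |dot c e| / (|dot w e| + 1) := by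
      rw [hμ]
      split
      · next hne => exact T.min'_le _ hmem
      · next hne => exact absurd ⟨_, hmem⟩ hne
    have h1 : 0 < |dot w e| + 1 := by positivity
    have h2 : μ * (|dot w e| + 1) ≤ |dot c e| := (le_div_iff₀ h1).1 hμle'
    nlinarith [hμpos]
  refine ⟨c + μ • w, ?_, ?_⟩
  · intro e he he0
    by_cases hce : dot c e = 0
    · rw [dot_add_left, hce, zero_add, dot_smul_left]
      exact mul_ne_zero (ne_of_gt hμpos) (hw e he he0)
    · rw [dot_add_left, dot_smul_left]
      intro hcon
      have h3 : dot c e = -(μ * dot w e) := by linarith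
      have h4 : |dot c e| = μ * |dot w e| := by rw [h3, abs_neg, abs_mul, abs_of_pos hμpos]
      linarith [hμle e he hce]
  · intro e he hce
    have := hμle e he hce
    rw [dot_add_left, dot_smul_left]
    constructor <;> intro hh
    · by_contra hcon
      push_neg at hcon
      have hclt : dot c e < 0 := lt_of_le_of_ne hcon hce
      have : μ * dot w e ≤ μ * |dot w e| := by
        have := le_abs_self (dot w e)
        nlinarith [hμpos]
      have habs : |dot c e| = - dot c e := abs_of_neg hclt
      linarith
    · have : - (μ * dot w e) ≤ μ * |dot w e| := by
        have := neg_abs_le (dot w e)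
        nlinarith [hμpos]
      have habs : |dot c e| = dot c e := abs_of_pos hh
      linarith

/-- lower bound: any monotone-path bound N for the zonotope is at least the number of
parallel classes of generators with nonzero objective -/
lemma zono_card_le (N : ℕ)
    (hz : ∀ z0 ∈ Set.extremePoints ℝ (zonotopeOf n E),
      HasMonoPathLe n (zonotopeOf n E) c z0 N) :
    (Dcl E c).card ≤ N := by
  classical
  obtain ⟨h, hgen, hsign⟩ := exists_h E c
  have hz0ext : zmax E h ∈ Set.extremePoints ℝ (zonotopeOf n E) := zmax_extreme E h hgen
  obtain ⟨L, hLN, q, hq0, hqext, hqstep, hqmin⟩ := hz (zmax E h) hz0ext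
  -- pick subset representations for each path vertex
  have hrep : ∀ t : Fin (L+1), ∃ S : Finset (Fin n → ℝ), S ⊆ E ∧ vsum S = q t := by
    intro t
    have h1 : q t ∈ convexHull ℝ ((TT E : Finset (Fin n → ℝ)) : Set (Fin n → ℝ)) := by
      rw [← zono_eq_hull]
      exact (hqext t).1
    have h2 : q t ∈ (TT E : Set (Fin n → ℝ)) := by
      apply extremePoints_convexHull_subset (𝕜 := ℝ)
      rw [← zono_eq_hull]
      exact hqext t
    rw [Finset.mem_coe, TT, Finset.mem_image] at h2
    obtain ⟨S, hS, hSsum⟩ := h2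
    exact ⟨S, Finset.mem_powerset.1 hS, hSsum⟩
  choose S hSsub hSsum using hrep
  -- dot c as the sums in the path statement
  have hdot : ∀ z : Fin n → ℝ, (∑ i, c i * z i) = dot c z := fun z => rfl
  -- endpoint 0 : representation matches sign of h (hence of c)
  have hend0 : ∀ e ∈ E, dot c e ≠ 0 → (e ∈ S 0 ↔ 0 < dot c e) := by
    intro e he hce
    have he0 : e ≠ 0 := fun h0 => hce (h0 ▸ dot_zero_right c)
    have hM : dot h (∑ e ∈ E, ind (S 0) e • e) = Msum E h := by
      rw [sum_ind E (hSsub 0), hSsum 0, hq0, dot_zmax]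
    have hf := zono_force E h (ind (S 0)) (ind_bounds _) hM e he
    have hhe := hgen e he he0
    rw [← hsign e he hce]
    rcases lt_or_gt_of_ne hhe with hlt | hgt
    · constructor
      · intro hmem
        exact absurd ((ind_zero_iff _ e).1 (hf.2 hlt)) (by simpa using hmem)
      · intro hpos; linarith
    · exact ⟨fun _ => hgt, fun _ => (ind_one_iff _ e).1 (hf.1 hgt)⟩
  -- endpoint last : representation matches the c-minimal vertex
  have hendL : ∀ e ∈ E, dot c e ≠ 0 → (e ∈ S (Fin.last L) ↔ dot c e < 0) := by
    intro e he hce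
    have hqlZ : q (Fin.last L) ∈ zonotopeOf n E := (hqext (Fin.last L)).1
    have hmin1 : dot c (q (Fin.last L)) ≤ dot c (zmax E (-c)) := by
      rw [← hdot, ← hdot]
      exact hqmin _ (zmax_mem E (-c))
    have hM : dot (-c) (∑ e ∈ E, ind (S (Fin.last L)) e • e) = Msum E (-c) := by
      rw [sum_ind E (hSsub _), hSsum]
      refine le_antisymm (zono_le_Msum E (-c) _ hqlZ) ?_
      rw [← dot_zmax E (-c), dot_neg_left, dot_neg_left]
      linarith
    have hf := zono_force E (-c) (ind (S (Fin.last L))) (ind_bounds _) hM e he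
    simp only [dot_neg_left] at hf
    constructor
    · intro hmem
      by_contra hcon
      push_neg at hcon
      have hpos : 0 < dot c e := lt_of_le_of_ne hcon (Ne.symm hce)
      have := hf.2 (by linarith)
      exact absurd ((ind_zero_iff _ e).1 this) (by simpa using hmem)
    · intro hneg
      exact (ind_one_iff _ e).1 (hf.1 (by linarith))
  -- every class is flipped at some step
  have hcover : ∀ φ ∈ Dcl E c, ∃ k : Fin L,
      φ = nrm c (q k.succ - q k.castSucc) := by
    intro φ hφ
    rw [Dcl, Finset.mem_image] at hφ
    obtain ⟨e, hef, rfl⟩ := hφ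
    rw [Finset.mem_filter] at hef
    obtain ⟨heE, hce⟩ := hef
    have he0 : e ≠ 0 := fun h0 => hce (h0 ▸ dot_zero_right c)
    have hflip : ¬ ((e ∈ S 0) ↔ (e ∈ S (Fin.last L))) := by
      rw [hend0 e heE hce, hendL e heE hce]
      rcases lt_or_gt_of_ne hce with hlt | hgt
      · intro hiff; linarith [hiff.2 hlt]
      · intro hiff; linarith [hiff.1 hgt]
    obtain ⟨k, hk⟩ := fin_chain (fun t => e ∈ S t) hflip
    obtain ⟨hne, hexp, hdec⟩ := hqstep k
    obtain ⟨s, hs, hse⟩ := step_flip E hne hexp (hSsub k.castSucc) (hSsub k.succ)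
      (hSsum k.castSucc) (hSsum k.succ) e heE he0 hk
    have hcdiff : dot c (q k.succ - q k.castSucc) ≠ 0 := by
      rw [dot_sub_right]
      rw [hdot, hdot] at hdec
      linarith
    refine ⟨k, ?_⟩
    rw [hse, nrm_smul c hs hcdiff]
  have hsub : Dcl E c ⊆ Finset.image (fun k : Fin L => nrm c (q k.succ - q k.castSucc))
      Finset.univ := by
    intro φ hφ
    obtain ⟨k, hk⟩ := hcover φ hφ
    rw [Finset.mem_image]
    exact ⟨k, Finset.mem_univ k, hk.symm⟩
  calc (Dcl E c).card ≤ _ := Finset.card_le_card hsub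
    _ ≤ (Finset.univ : Finset (Fin L)).card := Finset.card_image_le
    _ = L := by simp
    _ ≤ N := hLN
end Sh

section Si
variable (Vset : Finset (Fin n → ℝ)) (c : Fin n → ℝ)
/-- the finite set of "bad directions" for genericity -/
def UP : Finset (Fin n → ℝ) :=
  (Vset ×ˢ Vset).image (fun p => p.1 - p.2) ∪
  (Vset ×ˢ (Vset ×ˢ Vset)).image (fun p =>
    (dot c (p.1 - p.2.1)) • (p.1 - p.2.2) - (dot c (p.1 - p.2.2)) • (p.1 - p.2.1))

lemma pair_mem_UP {u v : Fin n → ℝ} (hu : u ∈ Vset) (hv : v ∈ Vset) : u - v ∈ UP Vset c := by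
  apply Finset.mem_union_left
  rw [Finset.mem_image]
  exact ⟨(u, v), Finset.mem_product.2 ⟨hu, hv⟩, rfl⟩

lemma triple_mem_UP {u v w : Fin n → ℝ} (hu : u ∈ Vset) (hv : v ∈ Vset) (hw : w ∈ Vset) :
    (dot c (u - v)) • (u - w) - (dot c (u - w)) • (u - v) ∈ UP Vset c := by
  apply Finset.mem_union_right
  rw [Finset.mem_image]
  exact ⟨(u, v, w), Finset.mem_product.2 ⟨hu, Finset.mem_product.2 ⟨hv, hw⟩⟩, rfl⟩

/-- pairwise genericity of d on Vset -/
lemma pair_ne {d : Fin n → ℝ} (hgen : ∀ u ∈ UP Vset c, u ≠ 0 → dot d u ≠ 0)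
    {u v : Fin n → ℝ} (hu : u ∈ Vset) (hv : v ∈ Vset) (huv : u ≠ v) : dot d (u - v) ≠ 0 :=
  hgen _ (pair_mem_UP Vset c hu hv) (sub_ne_zero.2 huv)

/-- three points of Vset tied at a common positive parameter are collinear -/
lemma collinear_of_ties {d : Fin n → ℝ} (hgen : ∀ u ∈ UP Vset c, u ≠ 0 → dot d u ≠ 0)
    {u v w : Fin n → ℝ} (hu : u ∈ Vset) (hv : v ∈ Vset) (hw : w ∈ Vset)
    (huv : u ≠ v) {lam : ℝ} (hlam : 0 < lam)
    (t1 : dot c u + lam * dot d u = dot c v + lam * dot d v)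
    (t2 : dot c u + lam * dot d u = dot c w + lam * dot d w) :
    ∃ r : ℝ, w - u = r • (v - u) := by
  have e1 : dot c (u - v) = -(lam * dot d (u - v)) := by
    rw [dot_sub_right, dot_sub_right]; linarith
  have e2 : dot c (u - w) = -(lam * dot d (u - w)) := by
    rw [dot_sub_right, dot_sub_right]; linarith
  have hα : dot c (u - v) ≠ 0 := by
    intro h0
    rw [h0] at e1
    have hdd : lam * dot d (u - v) = 0 := by linarith
    have : dot d (u - v) = 0 := by
      rcases mul_eq_zero.1 hdd with h | h
      · exact absurd h (ne_of_gt hlam)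
      · exact h
    exact pair_ne Vset c hgen hu hv huv this
  set vec := (dot c (u - v)) • (u - w) - (dot c (u - w)) • (u - v) with hvec
  have hdvec : dot d vec = 0 := by
    rw [hvec, dot_sub_right, dot_smul_right, dot_smul_right, e1, e2]
    ring
  have hvec0 : vec = 0 := by
    by_contra hne
    exact hgen vec (triple_mem_UP Vset c hu hv hw) hne hdvec
  rw [hvec, sub_eq_zero] at hvec0
  refine ⟨(dot c (u - v))⁻¹ * dot c (u - w), ?_⟩
  have : u - w = ((dot c (u - v))⁻¹ * dot c (u - w)) • (u - v) := by
    rw [mul_smul, ← hvec0, smul_smul, inv_mul_cancel₀ hα, one_smul]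
  calc w - u = -(u - w) := by abel
    _ = -(((dot c (u - v))⁻¹ * dot c (u - w)) • (u - v)) := by rw [← this]
    _ = ((dot c (u - v))⁻¹ * dot c (u - w)) • (v - u) := by rw [← smul_neg]; congr 1; abel

/-- generic objective-perturbation direction d -/
lemma exists_generic {x0 d0 : Fin n → ℝ}
    (hd0 : ∀ v ∈ Vset, v ≠ x0 → 0 < dot d0 (v - x0)) :
    ∃ d : Fin n → ℝ, (∀ v ∈ Vset, v ≠ x0 → 0 < dot d (v - x0)) ∧
      (∀ u ∈ UP Vset c, u ≠ 0 → dot d u ≠ 0) := by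
  classical
  obtain ⟨w, hw⟩ := exists_ortho_avoid (UP Vset c)
  set B := (UP Vset c).image (fun u => -(dot d0 u) / (dot w u)) with hB
  set T := (Vset.erase x0).image (fun v => dot d0 (v - x0) / (|dot w (v - x0)| + 1)) with hT
  have hTpos : ∀ r ∈ T, 0 < r := by
    intro r hr
    rw [hT, Finset.mem_image] at hr
    obtain ⟨v, hv, rfl⟩ := hr
    rw [Finset.mem_erase] at hv
    have := hd0 v hv.2 hv.1
    positivity
  set δ := if hne : T.Nonempty then T.min' hne else 1 with hδdef
  have hδpos : 0 < δ := by
    rw [hδdef]; split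
    · next hne => exact hTpos _ (T.min'_mem hne)
    · norm_num
  obtain ⟨t, ht0, htδ, htB⟩ := exists_avoid B hδpos
  refine ⟨d0 + t • w, ?_, ?_⟩
  · intro v hv hvx
    have hvT : dot d0 (v - x0) / (|dot w (v - x0)| + 1) ∈ T := by
      rw [hT, Finset.mem_image]
      exact ⟨v, Finset.mem_erase.2 ⟨hvx, hv⟩, rfl⟩
    have hδle : δ ≤ dot d0 (v - x0) / (|dot w (v - x0)| + 1) := by
      rw [hδdef]; split
      · next hne => exact T.min'_le _ hvT
      · next hne => exact absurd ⟨_, hvT⟩ hne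
    have habs : 0 < |dot w (v - x0)| + 1 := by positivity
    have h2 : t * (|dot w (v - x0)| + 1) < dot d0 (v - x0) := by
      have := lt_of_lt_of_le htδ hδle
      exact (lt_div_iff₀ habs).1 this
    have h3 : -(t * |dot w (v - x0)|) ≤ t * dot w (v - x0) := by
      nlinarith [neg_abs_le (dot w (v - x0)), ht0.le]
    rw [dot_add_left, dot_smul_left]
    nlinarith
  · intro u hu hu0
    rw [dot_add_left, dot_smul_left]
    intro hcon
    apply htB
    rw [hB, Finset.mem_image]
    refine ⟨u, hu, ?_⟩
    have hwu := hw u hu hu0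
    field_simp
    linarith

/-- a strictly separating direction exists at each extreme point of the hull -/
lemma exists_d0 {x0 : Fin n → ℝ}
    (hx0 : x0 ∈ Set.extremePoints ℝ (convexHull ℝ (Vset : Set (Fin n → ℝ)))) :
    x0 ∈ Vset ∧ ∃ d0 : Fin n → ℝ, ∀ v ∈ Vset, v ≠ x0 → 0 < dot d0 (v - x0) := by
  classical
  have hx0V : x0 ∈ Vset := by
    have := extremePoints_convexHull_subset (𝕜 := ℝ) hx0
    exact_mod_cast this
  refine ⟨hx0V, ?_⟩
  have hP : Convex ℝ (convexHull ℝ (Vset : Set (Fin n → ℝ))) := convex_convexHull ℝ _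
  have hnotin : x0 ∉ convexHull ℝ ((convexHull ℝ (Vset : Set (Fin n → ℝ))) \ {x0}) := by
    have := (hP.mem_extremePoints_iff_mem_diff_convexHull_diff).1 hx0
    exact this.2
  have hnotin2 : x0 ∉ convexHull ℝ ((Vset.erase x0 : Finset (Fin n → ℝ)) : Set (Fin n → ℝ)) := by
    intro hmem
    apply hnotin
    apply convexHull_mono ?_ hmem
    intro v hv
    rw [Finset.coe_erase] at hv
    exact ⟨subset_convexHull ℝ _ hv.1, hv.2⟩
  have hclosed : IsClosed (convexHull ℝ ((Vset.erase x0 : Finset (Fin n → ℝ)) : Set (Fin n → ℝ))) :=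
    (Vset.erase x0).finite_toSet.isClosed_convexHull ℝ
  obtain ⟨f, u, hfx0, hfv⟩ := geometric_hahn_banach_point_closed
    (convex_convexHull ℝ _) hclosed hnotin2
  set d0 : Fin n → ℝ := fun i => f (Pi.single i 1) with hd0
  refine ⟨d0, fun v hv hvx => ?_⟩
  have hfv' : u < f v := hfv v (subset_convexHull ℝ _ (by
    rw [Finset.coe_erase]; exact ⟨hv, hvx⟩))
  have h1 : f v = dot d0 v := clm_eq_dot f v
  have h2 : f x0 = dot d0 x0 := clm_eq_dot f x0
  rw [dot_sub_right]
  linarith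
end Si

section Sj
variable (Vset : Finset (Fin n → ℝ)) (c d : Fin n → ℝ) (E : Finset (Fin n → ℝ))
/-- The conclusion of the main induction -/
def PathOut (x : Fin n → ℝ) (lam1 : ℝ) : Prop :=
  ∃ (L : ℕ) (p : Fin (L+1) → Fin n → ℝ) (lam : Fin L → ℝ) (dir : Fin L → (Fin n → ℝ)),
    p 0 = x ∧
    (∀ t, p t ∈ Set.extremePoints ℝ (convexHull ℝ (Vset : Set (Fin n → ℝ)))) ∧
    (∀ t : Fin L, p t.castSucc ≠ p t.succ ∧
      IsExposed ℝ (convexHull ℝ (Vset : Set (Fin n → ℝ))) (segment ℝ (p t.castSucc) (p t.succ)) ∧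
      dot c (p t.succ) < dot c (p t.castSucc)) ∧
    (∀ y ∈ convexHull ℝ (Vset : Set (Fin n → ℝ)), dot c (p (Fin.last L)) ≤ dot c y) ∧
    (∀ k, 0 < lam k ∧ lam k < lam1) ∧
    (∀ k j : Fin L, k ≠ j → lam k ≠ lam j) ∧
    (∀ k, dir k ∈ E ∧ dot c (dir k) ≠ 0 ∧ dot c (dir k) + lam k * dot d (dir k) = 0)

/-- zero-length path -/
lemma path_zero {x : Fin n → ℝ} {lam1 : ℝ} (hxV : x ∈ Vset) (hl1 : 0 < lam1)
    (hUA : ∀ v ∈ Vset, v ≠ x → dot c x + lam1 * dot d x < dot c v + lam1 * dot d v)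
    (hmin : ∀ v ∈ Vset, dot c x ≤ dot c v) : PathOut Vset c d E x lam1 := by
  refine ⟨0, fun _ => x, Fin.elim0, Fin.elim0, rfl, ?_, fun t => t.elim0, ?_,
    fun k => k.elim0, fun k => k.elim0, fun k => k.elim0⟩
  · intro t
    refine extreme_of_unique_argmin (a := c + lam1 • d) hxV ?_
    intro v hv hvx
    rw [dot_add_left, dot_add_left, dot_smul_left, dot_smul_left]
    exact hUA v hv hvx
  · intro y hy
    exact dot_le_on_hull hmin y hy

/-- prepend one step to a path -/
lemma path_prepend {x y e : Fin n → ℝ} {lam1 lams lam2 : ℝ}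
    (hxV : x ∈ Vset) (hl1 : 0 < lam1)
    (hUA : ∀ v ∈ Vset, v ≠ x → dot c x + lam1 * dot d x < dot c v + lam1 * dot d v)
    (hxy : x ≠ y) (hcyx : dot c y < dot c x)
    (hexp : IsExposed ℝ (convexHull ℝ (Vset : Set (Fin n → ℝ))) (segment ℝ x y))
    (hls1 : lams < lam1) (hl2s : lam2 < lams) (hl2 : 0 < lam2)
    (he : e ∈ E) (hce : dot c e ≠ 0) (hroot : dot c e + lams * dot d e = 0)
    (hrest : PathOut Vset c d E y lam2) : PathOut Vset c d E x lam1 := by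
  obtain ⟨L', p', lam', dir', hp0, hpext, hpstep, hpmin, hlamb, hlamne, hdir⟩ := hrest
  have hlams0 : 0 < lams := lt_trans hl2 hl2s
  refine ⟨L' + 1, Fin.cons x p', Fin.cons lams lam', Fin.cons e dir', Fin.cons_zero _ _, ?_, ?_, ?_, ?_, ?_, ?_⟩
  · intro t
    induction t using Fin.cases with
    | zero =>
      rw [Fin.cons_zero]
      refine extreme_of_unique_argmin (a := c + lam1 • d) hxV ?_
      intro v hv hvx
      rw [dot_add_left, dot_add_left, dot_smul_left, dot_smul_left]
      exact hUA v hv hvx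
    | succ j => rw [Fin.cons_succ]; exact hpext j
  · intro t
    induction t using Fin.cases with
    | zero =>
      rw [Fin.castSucc_zero, Fin.cons_zero]
      have h1 : (0 : Fin (L'+1)).succ = (Fin.succ 0 : Fin (L'+2)) := rfl
      rw [show ((0 : Fin (L'+1)).succ) = Fin.succ (0 : Fin (L'+1)) from rfl, Fin.cons_succ, hp0]
      exact ⟨hxy, hexp, hcyx⟩
    | succ j =>
      rw [← Fin.succ_castSucc, Fin.cons_succ, Fin.cons_succ]
      exact hpstep j
  · have hlast : Fin.last (L' + 1) = Fin.succ (Fin.last L') := (Fin.succ_last L').symm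
    rw [hlast, Fin.cons_succ]
    exact hpmin
  · intro k
    induction k using Fin.cases with
    | zero => rw [Fin.cons_zero]; exact ⟨hlams0, hls1⟩
    | succ j =>
      rw [Fin.cons_succ]
      exact ⟨(hlamb j).1, lt_trans (lt_trans (hlamb j).2 hl2s) hls1⟩
  · intro k j hkj
    induction k using Fin.cases with
    | zero =>
      induction j using Fin.cases with
      | zero => exact absurd rfl hkj
      | succ j' =>
        rw [Fin.cons_zero, Fin.cons_succ]
        have := (hlamb j').2
        intro heq
        rw [← heq] at this
        linarith
    | succ k' =>
      induction j using Fin.cases with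
      | zero =>
        rw [Fin.cons_zero, Fin.cons_succ]
        have := (hlamb k').2
        intro heq
        rw [heq] at this
        linarith
      | succ j' =>
        rw [Fin.cons_succ, Fin.cons_succ]
        exact hlamne k' j' (fun h => hkj (by rw [h]))
  · intro k
    induction k using Fin.cases with
    | zero =>
      rw [Fin.cons_zero, Fin.cons_zero]
      exact ⟨he, hce, hroot⟩
    | succ j =>
      rw [Fin.cons_succ, Fin.cons_succ]
      exact hdir j
end Sj

section Sk
variable (Vset : Finset (Fin n → ℝ)) (c d : Fin n → ℝ) (E : Finset (Fin n → ℝ))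
lemma case_split
    (hgen : ∀ u ∈ UP Vset c, u ≠ 0 → dot d u ≠ 0)
    (hE' : ∀ x y : Fin n → ℝ, x ≠ y →
      IsExposed ℝ (convexHull ℝ (Vset : Set (Fin n → ℝ))) (segment ℝ x y) →
      ∃ e ∈ E, ∃ r : ℝ, y - x = r • e)
    {x : Fin n → ℝ} {lam1 : ℝ} (hxV : x ∈ Vset) (hl1 : 0 < lam1)
    (hUA : ∀ v ∈ Vset, v ≠ x → dot c x + lam1 * dot d x < dot c v + lam1 * dot d v) :
    (∀ v ∈ Vset, dot c x ≤ dot c v) ∨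
    ∃ (y e : Fin n → ℝ) (lams lam2 : ℝ),
      y ∈ Vset ∧ x ≠ y ∧ dot c y < dot c x ∧ 0 < lam2 ∧ lam2 < lams ∧ lams < lam1 ∧
      (∀ v ∈ Vset, v ≠ y → dot c y + lam2 * dot d y < dot c v + lam2 * dot d v) ∧
      IsExposed ℝ (convexHull ℝ (Vset : Set (Fin n → ℝ))) (segment ℝ x y) ∧
      e ∈ E ∧ dot c e ≠ 0 ∧ dot c e + lams * dot d e = 0 := by
  classical
  set lamof : (Fin n → ℝ) → ℝ := fun v => (dot c x - dot c v) / (dot d v - dot d x) with hlamof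
  have hBne : ∀ v ∈ Vset, v ≠ x → dot d v - dot d x ≠ 0 := by
    intro v hv hvx
    have := pair_ne Vset c hgen hv hxV hvx
    rw [dot_sub_right] at this
    exact this
  have htie : ∀ v ∈ Vset, v ≠ x → ∀ μ : ℝ,
      (dot c x + μ * dot d x = dot c v + μ * dot d v ↔ μ = lamof v) := by
    intro v hv hvx μ
    rw [hlamof]
    dsimp only
    rw [eq_div_iff (hBne v hv hvx)]
    constructor <;> intro h <;> linear_combination -h
  set W := (Vset.erase x).filter (fun v => 0 < lamof v ∧ lamof v < lam1) with hW
  by_cases hWne : W.Nonempty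
  case neg =>
    -- case A : x is the c-minimum
    left
    intro v hv
    rcases eq_or_ne v x with rfl | hvx
    · exact le_refl _
    by_contra hcon
    push_neg at hcon
    have hUAv := hUA v hv hvx
    have hs0 := hBne v hv hvx
    have hbridge : lam1 * (dot d v - dot d x) = lam1 * dot d v - lam1 * dot d x := by ring
    have hspos : 0 < dot d v - dot d x := by
      rcases lt_or_gt_of_ne hs0 with hlt | hgt
      · exfalso
        have : lam1 * (dot d v - dot d x) ≤ 0 :=
          mul_nonpos_of_nonneg_of_nonpos hl1.le hlt.le
        rw [hbridge] at this
        linarith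
      · exact hgt
    apply hWne
    refine ⟨v, Finset.mem_filter.2 ⟨Finset.mem_erase.2 ⟨hvx, hv⟩, ?_, ?_⟩⟩
    · exact div_pos (by linarith) hspos
    · rw [hlamof]
      dsimp only
      rw [div_lt_iff₀ hspos]
      linarith [hbridge]
  case pos =>
    right
    have hWprop : ∀ v ∈ W, v ∈ Vset ∧ v ≠ x ∧ 0 < lamof v ∧ lamof v < lam1 := by
      intro v hv
      obtain ⟨hv1, hv2⟩ := Finset.mem_filter.1 hv
      obtain ⟨hv3, hv4⟩ := Finset.mem_erase.1 hv1
      exact ⟨hv4, hv3, hv2.1, hv2.2⟩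
    set lams := (W.image lamof).max' (hWne.image lamof) with hlams
    obtain ⟨vstar, hvstarW, hvstareq⟩ : ∃ v ∈ W, lamof v = lams := by
      have := (W.image lamof).max'_mem (hWne.image lamof)
      rw [Finset.mem_image] at this
      obtain ⟨v, hv, hveq⟩ := this
      exact ⟨v, hv, hveq⟩
    have hlams_pos : 0 < lams := hvstareq ▸ (hWprop vstar hvstarW).2.2.1
    have hlams_lt : lams < lam1 := hvstareq ▸ (hWprop vstar hvstarW).2.2.2
    have hlamsmax : ∀ v ∈ W, lamof v ≤ lams :=
      fun v hv => (W.image lamof).le_max' _ (Finset.mem_image_of_mem lamof hv)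
    clear hlams
    clear_value lams
    set S := W.filter (fun v => lamof v = lams) with hS
    have hSne : S.Nonempty := ⟨vstar, Finset.mem_filter.2 ⟨hvstarW, hvstareq⟩⟩
    obtain ⟨y, hyS, hymax⟩ := S.exists_max_image (fun v => dot d v) hSne
    have hySprop : y ∈ W ∧ lamof y = lams := Finset.mem_filter.1 hyS
    obtain ⟨hyV, hyx, _, _⟩ := hWprop y hySprop.1
    -- tie of x and y at lams
    have htiey : dot c x + lams * dot d x = dot c y + lams * dot d y :=
      (htie y hyV hyx lams).2 hySprop.2.symm
    -- d-gap between x and y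
    have hBxy : dot d x < dot d y := by
      have h1 := hUA y hyV hyx
      by_contra hcon
      push_neg at hcon
      have h2 : 0 ≤ (lam1 - lams) * (dot d x - dot d y) :=
        mul_nonneg (by linarith) (by linarith)
      nlinarith
    have hcyx : dot c y < dot c x := by nlinarith
    -- every vertex not in S ∪ {x} is strictly worse at lams
    have hstrict : ∀ v ∈ Vset, v ≠ x → v ∉ S →
        dot c x + lams * dot d x < dot c v + lams * dot d v := by
      intro v hv hvx hvS
      by_contra hcon
      push_neg at hcon
      rcases eq_or_lt_of_le hcon with heq | hlt
      · -- tie at lams : v would be in S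
        apply hvS
        have : lams = lamof v := (htie v hv hvx lams).1 heq.symm
        refine Finset.mem_filter.2 ⟨?_, this.symm⟩
        refine Finset.mem_filter.2 ⟨Finset.mem_erase.2 ⟨hvx, hv⟩, ?_, ?_⟩
        · rw [← this]; exact hlams_pos
        · rw [← this]; exact hlams_lt
      · -- strictly better at lams : the crossing with x lies in (lams, lam1), contradicting maximality
        have hUAv := hUA v hv hvx
        have hs0 := hBne v hv hvx
        have hspos : 0 < dot d v - dot d x := by
          rcases lt_or_gt_of_ne hs0 with hneg | hpos
          · exfalso
            have h2 : 0 ≤ (lam1 - lams) * (dot d x - dot d v) :=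
              mul_nonneg (by linarith) (by linarith)
            nlinarith
          · exact hpos
        have hroot := (htie v hv hvx (lamof v)).2 rfl
        have hrgt : lams < lamof v := by
          by_contra hcon2
          push_neg at hcon2
          have h2 : 0 ≤ (lams - lamof v) * (dot d v - dot d x) :=
            mul_nonneg (by linarith) (by linarith)
          nlinarith
        have hrlt : lamof v < lam1 := by
          by_contra hcon2
          push_neg at hcon2
          have h2 : 0 ≤ (lamof v - lam1) * (dot d v - dot d x) :=
            mul_nonneg (by linarith) (by linarith)
          nlinarith
        have hvW : v ∈ W :=
          Finset.mem_filter.2 ⟨Finset.mem_erase.2 ⟨hvx, hv⟩, by linarith, hrlt⟩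
        linarith [hlamsmax v hvW]
    have hmin : ∀ v ∈ Vset, dot c x + lams * dot d x ≤ dot c v + lams * dot d v := by
      intro v hv
      rcases eq_or_ne v x with rfl | hvx
      · exact le_refl _
      by_cases hvS : v ∈ S
      · have h1 : lamof v = lams := (Finset.mem_filter.1 hvS).2
        exact ((htie v hv hvx lams).2 h1.symm).le
      · exact (hstrict v hv hvx hvS).le
    have heqcase : ∀ v ∈ Vset, dot c v + lams * dot d v = dot c x + lams * dot d x →
        v = x ∨ v ∈ S := by
      intro v hv heq
      rcases eq_or_ne v x with rfl | hvx
      · exact Or.inl rfl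
      by_contra hcon
      push_neg at hcon
      exact absurd heq (ne_of_gt (hstrict v hv hvx hcon.2))
    -- S members tie at lams and have positive d-gap
    have hStie : ∀ v ∈ S, dot c x + lams * dot d x = dot c v + lams * dot d v := by
      intro v hvS
      obtain ⟨hvW, hveq⟩ := Finset.mem_filter.1 hvS
      obtain ⟨hv, hvx, _, _⟩ := hWprop v hvW
      exact (htie v hv hvx lams).2 hveq.symm
    have hSgap : ∀ v ∈ S, dot d x < dot d v := by
      intro v hvS
      obtain ⟨hvW, hveq⟩ := Finset.mem_filter.1 hvS
      obtain ⟨hv, hvx, _, _⟩ := hWprop v hvW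
      have h1 := hUA v hv hvx
      have h2 := hStie v hvS
      by_contra hcon
      push_neg at hcon
      have h3 : 0 ≤ (lam1 - lams) * (dot d x - dot d v) :=
        mul_nonneg (by linarith) (by linarith)
      nlinarith
    -- all ties lie on the segment [x, y]
    have hSseg : ∀ v ∈ S, v ∈ segment ℝ x y := by
      intro v hvS
      obtain ⟨hvW, hveq⟩ := Finset.mem_filter.1 hvS
      obtain ⟨hv, hvx, _, _⟩ := hWprop v hvW
      rcases eq_or_ne v y with heqvy | hvy
      · rw [heqvy]; exact right_mem_segment ℝ x y
      obtain ⟨r, hcol⟩ := collinear_of_ties Vset c hgen hxV hyV hv (Ne.symm hyx) hlams_pos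
        htiey (hStie v hvS)
      have hdv : dot d v - dot d x = r * (dot d y - dot d x) := by
        have h1 : dot d (v - x) = dot d (r • (y - x)) := by rw [hcol]
        rw [dot_sub_right, dot_smul_right, dot_sub_right] at h1
        linarith
      have hgapv := hSgap v hvS
      have hgapy := hBxy
      have hr0 : 0 < r := by nlinarith
      have hr1 : r ≤ 1 := by nlinarith [hymax v hvS]
      refine ⟨1 - r, r, by linarith, hr0.le, by ring, ?_⟩
      have hv' : v = x + r • (y - x) := by
        have := hcol
        rw [sub_eq_iff_eq_add] at this
        rw [this]; abel
      rw [hv']; module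
    -- the exposed edge
    have hbr : ∀ z : Fin n → ℝ, dot (c + lams • d) z = dot c z + lams * dot d z := by
      intro z; rw [dot_add_left, dot_smul_left]
    have hexp : IsExposed ℝ (convexHull ℝ (Vset : Set (Fin n → ℝ))) (segment ℝ x y) := by
      refine isExposed_segment (a := c + lams • d) hxV hyV ?_ ?_ ?_
      · intro v hv; rw [hbr, hbr]; exact hmin v hv
      · rw [hbr, hbr]; exact htiey.symm
      · intro v hv heq
        rw [hbr, hbr] at heq
        rcases heqcase v hv heq with heqvx | hvS
        · rw [heqvx]; exact left_mem_segment ℝ x y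
        · exact hSseg v hvS
    obtain ⟨e, he, r', hre⟩ := hE' x y (Ne.symm hyx) hexp
    have hr'0 : r' ≠ 0 := by
      intro h0
      rw [h0, zero_smul, sub_eq_zero] at hre
      exact hyx hre
    have hcdiff : dot c (y - x) = r' * dot c e := by rw [hre, dot_smul_right]
    have hddiff : dot d (y - x) = r' * dot d e := by rw [hre, dot_smul_right]
    have hce : dot c e ≠ 0 := by
      intro h0
      rw [h0, mul_zero] at hcdiff
      rw [dot_sub_right] at hcdiff
      linarith
    have hroot : dot c e + lams * dot d e = 0 := by
      have hz : dot c (y - x) + lams * dot d (y - x) = 0 := by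
        rw [dot_sub_right, dot_sub_right]; linarith
      have : r' * (dot c e + lams * dot d e) = 0 := by
        calc r' * (dot c e + lams * dot d e) = r' * dot c e + lams * (r' * dot d e) := by ring
          _ = dot c (y - x) + lams * dot d (y - x) := by rw [hcdiff, hddiff]
          _ = 0 := hz
      rcases mul_eq_zero.1 this with h | h
      · exact absurd h hr'0
      · exact h
    -- choose lam2
    set g : (Fin n → ℝ) → ℝ := fun v =>
      if 0 < dot d v - dot d y then
        lams - (dot c v + lams * dot d v - (dot c y + lams * dot d y)) / (dot d v - dot d y)
      else 0 with hg
    set M0 := insert (0:ℝ) ((Vset.erase y).image g) with hM0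
    have hM0ne : M0.Nonempty := ⟨0, Finset.mem_insert_self _ _⟩
    have hM0lt : ∀ rr ∈ M0, rr < lams := by
      intro rr hrr
      rcases Finset.mem_insert.1 hrr with rfl | hmem
      · exact hlams_pos
      rw [Finset.mem_image] at hmem
      obtain ⟨v, hv', rfl⟩ := hmem
      obtain ⟨hvy, hv⟩ := Finset.mem_erase.1 hv'
      rw [hg]
      dsimp only
      split
      case isFalse => exact hlams_pos
      case isTrue hδ =>
        have hφ0 : dot c y + lams * dot d y ≤ dot c v + lams * dot d v := by
          have := hmin v hv
          linarith
        have hφne : dot c v + lams * dot d v ≠ dot c y + lams * dot d y := by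
          intro heq
          have heq' : dot c v + lams * dot d v = dot c x + lams * dot d x := by linarith
          rcases heqcase v hv heq' with rfl | hvS
          · linarith [hBxy]
          · linarith [hymax v hvS]
        have hφpos : 0 < dot c v + lams * dot d v - (dot c y + lams * dot d y) := by
          rcases lt_or_eq_of_le hφ0 with h | h
          · linarith
          · exact absurd h.symm hφne
        have := div_pos hφpos hδ
        linarith
    set Mx := M0.max' hM0ne with hMx
    have hMx0 : 0 ≤ Mx := M0.le_max' 0 (Finset.mem_insert_self _ _)
    have hMxlt : Mx < lams := hM0lt _ (M0.max'_mem hM0ne)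
    have hMxmax : ∀ rr ∈ M0, rr ≤ Mx := fun rr hrr => M0.le_max' rr hrr
    clear hMx
    clear_value Mx
    set lam2 := (lams + Mx)/2 with hlam2
    have hl2 : 0 < lam2 := by rw [hlam2]; linarith
    have hl2s : lam2 < lams := by rw [hlam2]; linarith
    have hMxl2 : Mx < lam2 := by rw [hlam2]; linarith
    clear hlam2
    clear_value lam2
    have hUA2 : ∀ v ∈ Vset, v ≠ y → dot c y + lam2 * dot d y < dot c v + lam2 * dot d v := by
      intro v hv hvy
      by_cases hvSx : v = x ∨ v ∈ S
      · -- tied at lams, smaller d value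
        have htiev : dot c v + lams * dot d v = dot c y + lams * dot d y := by
          rcases hvSx with rfl | hvS
          · linarith [htiey]
          · linarith [hStie v hvS, htiey]
        have hdvy : dot d v < dot d y := by
          rcases hvSx with rfl | hvS
          · exact hBxy
          · have h1 := hymax v hvS
            have h2 : dot d v ≠ dot d y := by
              have := pair_ne Vset c hgen hv hyV hvy
              rw [dot_sub_right] at this
              intro heq; exact this (by linarith)
            exact lt_of_le_of_ne h1 h2
        have h3 : 0 < (lams - lam2) * (dot d y - dot d v) :=
          mul_pos (by linarith) (by linarith)
        nlinarith
      · push_neg at hvSx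
        have hφpos : 0 < dot c v + lams * dot d v - (dot c y + lams * dot d y) := by
          have := hstrict v hv hvSx.1 hvSx.2
          linarith
        by_cases hδ : 0 < dot d v - dot d y
        · have hgv : g v ∈ M0 := by
            rw [hM0]
            apply Finset.mem_insert_of_mem
            exact Finset.mem_image_of_mem g (Finset.mem_erase.2 ⟨hvy, hv⟩)
          have hgval : g v = lams -
              (dot c v + lams * dot d v - (dot c y + lams * dot d y)) / (dot d v - dot d y) := by
            rw [hg]; dsimp only; rw [if_pos hδ]
          have hglt : g v < lam2 := lt_of_le_of_lt (hMxmax _ hgv) hMxl2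
          rw [hgval] at hglt
          have h4 : lams - lam2 <
              (dot c v + lams * dot d v - (dot c y + lams * dot d y)) / (dot d v - dot d y) := by
            linarith
          have h5 : (lams - lam2) * (dot d v - dot d y) <
              dot c v + lams * dot d v - (dot c y + lams * dot d y) :=
            (lt_div_iff₀ hδ).1 h4
          have hb : dot c v + lam2 * dot d v - (dot c y + lam2 * dot d y)
              = (dot c v + lams * dot d v - (dot c y + lams * dot d y))
                - (lams - lam2) * (dot d v - dot d y) := by ring
          linarith [h5, hb]
        · push_neg at hδ
          have h6 : 0 ≤ (lams - lam2) * (dot d y - dot d v) :=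
            mul_nonneg (by linarith [hl2s]) (by linarith [hδ])
          have hb : dot c v + lam2 * dot d v - (dot c y + lam2 * dot d y)
              = (dot c v + lams * dot d v - (dot c y + lams * dot d y))
                + (lams - lam2) * (dot d y - dot d v) := by ring
          linarith [hφpos, h6, hb]
    exact ⟨y, e, lams, lam2, hyV, Ne.symm hyx, hcyx, hl2, hl2s, hlams_lt, hUA2, hexp, he, hce, hroot⟩
end Sk

section Sl
variable (Vset : Finset (Fin n → ℝ)) (c d : Fin n → ℝ) (E : Finset (Fin n → ℝ))
lemma path_ind
    (hgen : ∀ u ∈ UP Vset c, u ≠ 0 → dot d u ≠ 0)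
    (hE' : ∀ x y : Fin n → ℝ, x ≠ y →
      IsExposed ℝ (convexHull ℝ (Vset : Set (Fin n → ℝ))) (segment ℝ x y) →
      ∃ e ∈ E, ∃ r : ℝ, y - x = r • e) :
    ∀ K : ℕ, ∀ x : Fin n → ℝ, ∀ lam1 : ℝ, x ∈ Vset → 0 < lam1 →
    (∀ v ∈ Vset, v ≠ x → dot c x + lam1 * dot d x < dot c v + lam1 * dot d v) →
    (Vset.filter (fun v => dot c v < dot c x)).card ≤ K →
    PathOut Vset c d E x lam1 := by
  classical
  intro K
  induction K with
  | zero =>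
    intro x lam1 hxV hl1 hUA hcard
    rcases case_split Vset c d E hgen hE' hxV hl1 hUA with hA |
      ⟨y, e, lams, lam2, hyV, hxy, hcyx, _, _, _, _, _, _, _, _⟩
    · exact path_zero Vset c d E hxV hl1 hUA hA
    · exfalso
      have hy : y ∈ Vset.filter (fun v => dot c v < dot c x) :=
        Finset.mem_filter.2 ⟨hyV, hcyx⟩
      have := Finset.card_pos.2 ⟨y, hy⟩
      omega
  | succ K ih =>
    intro x lam1 hxV hl1 hUA hcard
    rcases case_split Vset c d E hgen hE' hxV hl1 hUA with hA |
      ⟨y, e, lams, lam2, hyV, hxy, hcyx, hl2, hl2s, hls1, hUA2, hexp, he, hce, hroot⟩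
    · exact path_zero Vset c d E hxV hl1 hUA hA
    · have hssub : Vset.filter (fun v => dot c v < dot c y) ⊂
          Vset.filter (fun v => dot c v < dot c x) := by
        constructor
        · intro v hv
          obtain ⟨hv1, hv2⟩ := Finset.mem_filter.1 hv
          exact Finset.mem_filter.2 ⟨hv1, lt_trans hv2 hcyx⟩
        · intro hsub
          have := hsub (Finset.mem_filter.2 ⟨hyV, hcyx⟩)
          exact absurd (Finset.mem_filter.1 this).2 (lt_irrefl _)
      have hcard2 : (Vset.filter (fun v => dot c v < dot c y)).card ≤ K := by
        have := Finset.card_lt_card hssub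
        omega
      exact path_prepend Vset c d E hxV hl1 hUA hxy hcyx hexp hls1 hl2s hl2 he hce hroot
        (ih y lam2 hyV hl2 hUA2 hcard2)

lemma class_inj {e1 e2 : Fin n → ℝ} (h1 : dot c e1 ≠ 0) (h2 : dot c e2 ≠ 0)
    (heq : nrm c e1 = nrm c e2) {l1 l2 : ℝ}
    (hr1 : dot c e1 + l1 * dot d e1 = 0) (hr2 : dot c e2 + l2 * dot d e2 = 0)
    (hne : l1 ≠ l2) : False := by
  have he1 : e1 = (dot c e1 * (dot c e2)⁻¹) • e2 := by
    have h3 : (dot c e1) • nrm c e1 = e1 := by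
      rw [nrm, smul_smul, mul_inv_cancel₀ h1, one_smul]
    have h4 : (dot c e1) • nrm c e2 = (dot c e1 * (dot c e2)⁻¹) • e2 := by
      rw [nrm, smul_smul]
    calc e1 = (dot c e1) • nrm c e1 := h3.symm
      _ = (dot c e1) • nrm c e2 := by rw [heq]
      _ = (dot c e1 * (dot c e2)⁻¹) • e2 := h4
  set s := dot c e1 * (dot c e2)⁻¹ with hs
  have hs0 : s ≠ 0 := mul_ne_zero h1 (inv_ne_zero h2)
  have hc1 : dot c e1 = s * dot c e2 := by rw [he1, dot_smul_right]
  have hd1 : dot d e1 = s * dot d e2 := by rw [he1, dot_smul_right]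
  have h5 : s * (dot c e2 + l1 * dot d e2) = 0 := by
    rw [mul_add]
    rw [← hc1]
    calc dot c e1 + s * (l1 * dot d e2) = dot c e1 + l1 * (s * dot d e2) := by ring
      _ = dot c e1 + l1 * dot d e1 := by rw [← hd1]
      _ = 0 := hr1
  have h6 : dot c e2 + l1 * dot d e2 = 0 := by
    rcases mul_eq_zero.1 h5 with h | h
    · exact absurd h hs0
    · exact h
  have h7 : (l1 - l2) * dot d e2 = 0 := by linarith [hr2]
  rcases mul_eq_zero.1 h7 with h | h
  · exact hne (by linarith)
  · rw [h, mul_zero, add_zero] at hr2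
    exact h2 hr2

/-- main construction : a monotone path bounded by the number of direction classes -/
lemma main_path
    (hE' : ∀ x y : Fin n → ℝ, x ≠ y →
      IsExposed ℝ (convexHull ℝ (Vset : Set (Fin n → ℝ))) (segment ℝ x y) →
      ∃ e ∈ E, ∃ r : ℝ, y - x = r • e) :
    ∀ x0 ∈ Set.extremePoints ℝ (convexHull ℝ (Vset : Set (Fin n → ℝ))),
      HasMonoPathLe n (convexHull ℝ (Vset : Set (Fin n → ℝ))) c x0 ((Dcl E c).card) := by
  classical
  intro x0 hx0
  obtain ⟨hx0V, d0, hd0⟩ := exists_d0 Vset hx0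
  obtain ⟨d, hd, hgen⟩ := exists_generic Vset c hd0
  -- choose a large enough initial parameter
  set T1 := (Vset.erase x0).image (fun v => (dot c x0 - dot c v) / (dot d (v - x0))) with hT1
  set lam1 := if h : T1.Nonempty then max 1 (T1.max' h + 1) else 1 with hlam1
  have hl1 : 0 < lam1 := by
    rw [hlam1]; split
    · exact lt_of_lt_of_le one_pos (le_max_left _ _)
    · norm_num
  have hUA : ∀ v ∈ Vset, v ≠ x0 → dot c x0 + lam1 * dot d x0 < dot c v + lam1 * dot d v := by
    intro v hv hvx
    have hgap : 0 < dot d (v - x0) := hd v hv hvx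
    have hmem : (dot c x0 - dot c v) / (dot d (v - x0)) ∈ T1 := by
      rw [hT1, Finset.mem_image]
      exact ⟨v, Finset.mem_erase.2 ⟨hvx, hv⟩, rfl⟩
    have hrat : (dot c x0 - dot c v) / (dot d (v - x0)) < lam1 := by
      rw [hlam1]; split
      · next hne =>
        have := T1.le_max' _ hmem
        have h2 : T1.max' hne + 1 ≤ max 1 (T1.max' hne + 1) := le_max_right _ _
        linarith
      · next hne => exact absurd ⟨_, hmem⟩ hne
    have h3 : dot c x0 - dot c v < lam1 * dot d (v - x0) := (div_lt_iff₀ hgap).1 hrat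
    have h4 : dot d (v - x0) = dot d v - dot d x0 := dot_sub_right d v x0
    have h5 : lam1 * (dot d v - dot d x0) = lam1 * dot d v - lam1 * dot d x0 := by ring
    rw [h4, h5] at h3
    linarith
  obtain ⟨L, p, lam, dir, hp0, hpext, hpstep, hpmin, hlamb, hlamne, hdir⟩ :=
    path_ind Vset c d E hgen hE' ((Vset.filter (fun v => dot c v < dot c x0)).card)
      x0 lam1 hx0V hl1 hUA (le_refl _)
  -- bound the length by the number of classes
  have hLle : L ≤ (Dcl E c).card := by
    have hmaps : ∀ k : Fin L, nrm c (dir k) ∈ Dcl E c := by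
      intro k
      obtain ⟨h1, h2, _⟩ := hdir k
      exact Finset.mem_image_of_mem _ (Finset.mem_filter.2 ⟨h1, h2⟩)
    have hinj : Set.InjOn (fun k : Fin L => nrm c (dir k)) (Finset.univ : Finset (Fin L)) := by
      intro k _ j _ heq
      by_contra hkj
      exact class_inj c d (hdir k).2.1 (hdir j).2.1 heq (hdir k).2.2 (hdir j).2.2
        (hlamne k j hkj)
    calc L = (Finset.univ : Finset (Fin L)).card := by simp
      _ ≤ (Dcl E c).card := Finset.card_le_card_of_injOn _ (fun k _ => hmaps k) hinj
  refine ⟨L, hLle, p, hp0, hpext, ?_, ?_⟩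
  · intro t
    obtain ⟨h1, h2, h3⟩ := hpstep t
    exact ⟨h1, h2, h3⟩
  · intro y hy
    exact hpmin y hy
end Sl

end
end S19X


/-- if the finite set E contains all edge directions of a polytope P, then the
monotone diameter of P is bounded by that of the zonotope Z(E): any uniform bound N on the
length of shortest monotone paths on Z(E) also works for P; in particular the monotone
diameter of P is at most |E|. -/
theorem stmt_19 (n : ℕ) (Vset : Finset (Fin n → ℝ)) (E : Finset (Fin n → ℝ))
    (P : Set (Fin n → ℝ)) (hP : P = convexHull ℝ (Vset : Set (Fin n → ℝ)))
    (hE : ∀ x y : Fin n → ℝ, x ≠ y → IsExposed ℝ P (segment ℝ x y) →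
      ∃ e ∈ E, ∃ r : ℝ, y - x = r • e)
    (c : Fin n → ℝ)
    (hnd : ∀ x ∈ Set.extremePoints ℝ P, ∀ y ∈ Set.extremePoints ℝ P, x ≠ y →
      ∑ i, c i * x i ≠ ∑ i, c i * y i) :
    (∀ N : ℕ,
      (∀ z0 ∈ Set.extremePoints ℝ (zonotopeOf n E),
        HasMonoPathLe n (zonotopeOf n E) c z0 N) →
      ∀ x0 ∈ Set.extremePoints ℝ P, HasMonoPathLe n P c x0 N) ∧
    ∀ x0 ∈ Set.extremePoints ℝ P, HasMonoPathLe n P c x0 E.card := by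
  subst hP
  constructor
  · intro N hzono x0 hx0
    obtain ⟨L, hL, rest⟩ := S19X.main_path Vset c E hE x0 hx0
    exact ⟨L, hL.trans (S19X.zono_card_le E c N hzono), rest⟩
  · intro x0 hx0
    obtain ⟨L, hL, rest⟩ := S19X.main_path Vset c E hE x0 hx0
    have hcard : (S19X.Dcl E c).card ≤ E.card :=
      le_trans Finset.card_image_le (Finset.card_filter_le _ _)
    exact ⟨L, hL.trans hcard, rest⟩
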